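/- Let (X₁*, X₂*) be a pair of real random variables and let ε₁, ε₂ be i.i.d. N(0,τ²) random variables, τ > 0, with (ε₁,ε₂) independent of (X₁*,X₂*). Suppose the joint survival function x ↦ P(X₁* > x, X₂* > x) is (strictly positive and) regularly varying at infinity with index −α for some α > 0. Then P(X₁* + ε₁ > x, X₂* + ε₂ > x) / P(X₁* > x, X₂* > x) → 1 as x → ∞. (Joint-tail claim of Proposition 1, part 1, regularly varying case.) -/

import Mathlib

open MeasureTheory ProbabilityTheory Filter Real

/-- `f` is regularly varying at infinity with index `ρ`:
for every `c > 0`, `f (c*x) / f x → c ^ ρ` as `x → ∞`. -/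
def RegularlyVarying (f : ℝ → ℝ) (ρ : ℝ) : Prop :=
  ∀ c : ℝ, 0 < c → Tendsto (fun x => f (c * x) / f x) atTop (nhds (c ^ ρ))

open Set NNReal in
private lemma gauss_tail_le' {v : ℝ≥0} (hv : v ≠ 0) {t : ℝ} (ht : 2 * (v:ℝ) ≤ t) :
    (gaussianReal 0 v (Set.Ioi t)).toReal ≤ (Real.sqrt (2 * π * v))⁻¹ * Real.exp (-t) := by
  have hvpos : (0:ℝ) < v := by exact_mod_cast pos_iff_ne_zero.mpr hv
  have ht0 : 0 < t := lt_of_lt_of_le (by positivity) ht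
  rw [gaussianReal_apply_eq_integral 0 hv,
    ENNReal.toReal_ofReal (setIntegral_nonneg measurableSet_Ioi fun x _ =>
      gaussianPDFReal_nonneg _ _ _)]
  have hK : (0:ℝ) ≤ (Real.sqrt (2 * π * v))⁻¹ := by positivity
  have hInt : IntegrableOn (fun x => (Real.sqrt (2 * π * v))⁻¹ * Real.exp (-x)) (Ioi t) := by
    simpa [IntegrableOn] using ((exp_neg_integrableOn_Ioi t one_pos).const_mul ((Real.sqrt (2 * π * v))⁻¹ : ℝ))
  calc ∫ x in Ioi t, gaussianPDFReal 0 v x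
      ≤ ∫ x in Ioi t, (Real.sqrt (2 * π * v))⁻¹ * Real.exp (-x) := by
        refine setIntegral_mono_on (integrable_gaussianPDFReal 0 v).integrableOn
          hInt measurableSet_Ioi fun x hx => ?_
        have hx' : t < x := hx
        unfold gaussianPDFReal
        refine mul_le_mul_of_nonneg_left (Real.exp_le_exp.2 ?_) hK
        have h1 : x ≤ x ^ 2 / (2 * v) := by
          rw [le_div_iff₀ (by positivity)]
          have : 2 * (v:ℝ) ≤ x := le_of_lt (lt_of_le_of_lt ht hx')
          nlinarith
        simp only [sub_zero]
        rw [neg_div]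
        linarith
    _ = (Real.sqrt (2 * π * v))⁻¹ * Real.exp (-t) := by
        rw [MeasureTheory.integral_const_mul, integral_exp_neg_Ioi]

open Set NNReal in
private lemma poly_lower' (F : ℝ → ℝ) (hmono : Antitone F) (hpos : ∀ x, 0 < F x) {β : ℝ}
    (hβ : 0 < β) {x₀ : ℝ} (hx₀ : 1 ≤ x₀)
    (h : ∀ x, x₀ ≤ x → (2:ℝ) ^ (-β) * F x ≤ F (2 * x)) :
    ∃ C > 0, ∀ x, x₀ ≤ x → C * x ^ (-β) ≤ F x := by
  have hx₀0 : 0 < x₀ := lt_of_lt_of_le one_pos hx₀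
  have hr : (0:ℝ) < (2:ℝ) ^ (-β) := Real.rpow_pos_of_pos two_pos _
  have step : ∀ n : ℕ, ((2:ℝ) ^ (-β)) ^ n * F x₀ ≤ F (2 ^ n * x₀) := by
    intro n
    induction n with
    | zero => simp
    | succ n ih =>
      have h2n : (1:ℝ) ≤ 2 ^ n := one_le_pow₀ one_le_two
      have hge : x₀ ≤ 2 ^ n * x₀ := le_mul_of_one_le_left hx₀0.le h2n
      calc ((2:ℝ) ^ (-β)) ^ (n+1) * F x₀ = (2:ℝ) ^ (-β) * (((2:ℝ) ^ (-β)) ^ n * F x₀) := by ring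
        _ ≤ (2:ℝ) ^ (-β) * F (2 ^ n * x₀) := by
            exact mul_le_mul_of_nonneg_left ih hr.le
        _ ≤ F (2 * (2 ^ n * x₀)) := h _ hge
        _ = F (2 ^ (n+1) * x₀) := by ring_nf
  refine ⟨F x₀ * x₀ ^ β * (2:ℝ) ^ (-β), by have := hpos x₀; positivity, fun x hx => ?_⟩
  have hx0 : 0 < x := lt_of_lt_of_le hx₀0 hx
  have hq : (1:ℝ) ≤ x / x₀ := (one_le_div hx₀0).2 hx
  have hlogb0 : 0 ≤ Real.logb 2 (x / x₀) := Real.logb_nonneg one_lt_two hq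
  set n : ℕ := ⌈Real.logb 2 (x / x₀)⌉₊ with hn
  have h1 : x ≤ 2 ^ n * x₀ := by
    have : Real.logb 2 (x / x₀) ≤ (n:ℝ) := Nat.le_ceil _
    have h2 : x / x₀ ≤ (2:ℝ) ^ (n:ℝ) := by
      calc x / x₀ = (2:ℝ) ^ Real.logb 2 (x / x₀) :=
            (Real.rpow_logb two_pos (by norm_num) (by positivity)).symm
        _ ≤ (2:ℝ) ^ (n:ℝ) := Real.rpow_le_rpow_of_exponent_le one_le_two this
      
    rw [Real.rpow_natCast] at h2
    calc x = (x / x₀) * x₀ := by field_simp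
      _ ≤ 2 ^ n * x₀ := mul_le_mul_of_nonneg_right h2 hx₀0.le
  have h2 : (n:ℝ) ≤ Real.logb 2 (x / x₀) + 1 := (Nat.ceil_lt_add_one hlogb0).le
  have key : F x₀ * x₀ ^ β * (2:ℝ) ^ (-β) * x ^ (-β) ≤ ((2:ℝ) ^ (-β)) ^ n * F x₀ := by
    have hrn : ((2:ℝ) ^ (-β)) ^ n = (2:ℝ) ^ ((-β) * (n:ℝ)) := by
      rw [← Real.rpow_natCast ((2:ℝ) ^ (-β)) n, ← Real.rpow_mul (by norm_num)]
    have hmono2 : (2:ℝ) ^ ((-β) * (Real.logb 2 (x / x₀) + 1)) ≤ (2:ℝ) ^ ((-β) * (n:ℝ)) := by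
      apply Real.rpow_le_rpow_of_exponent_le one_le_two
      nlinarith
    have heq : (2:ℝ) ^ ((-β) * (Real.logb 2 (x / x₀) + 1)) =
        x ^ (-β) * x₀ ^ β * (2:ℝ) ^ (-β) := by
      rw [mul_add, mul_one, Real.rpow_add two_pos, mul_comm (-β) _,
        Real.rpow_mul (by norm_num : (0:ℝ) ≤ 2),
        Real.rpow_logb two_pos (by norm_num) (by positivity),
        Real.div_rpow hx0.le hx₀0.le, Real.rpow_neg hx0.le, Real.rpow_neg hx₀0.le]
      field_simp
    rw [hrn]
    calc F x₀ * x₀ ^ β * (2:ℝ) ^ (-β) * x ^ (-β)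
        = (2:ℝ) ^ ((-β) * (Real.logb 2 (x / x₀) + 1)) * F x₀ := by rw [heq]; ring
      _ ≤ (2:ℝ) ^ ((-β) * (n:ℝ)) * F x₀ := mul_le_mul_of_nonneg_right hmono2 (hpos x₀).le
  calc F x₀ * x₀ ^ β * (2:ℝ) ^ (-β) * x ^ (-β) ≤ ((2:ℝ) ^ (-β)) ^ n * F x₀ := key
    _ ≤ F (2 ^ n * x₀) := step n
    _ ≤ F x := hmono h1

section
open Set NNReal
set_option maxHeartbeats 2000000

/-- Joint-tail claim of Proposition 1, part 1, regularly varying case. -/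
theorem stmt0
    {Ω : Type*} [MeasurableSpace Ω] (μ : Measure Ω) [IsProbabilityMeasure μ]
    (X₁ X₂ ε₁ ε₂ : Ω → ℝ)
    (hX₁ : Measurable X₁) (hX₂ : Measurable X₂)
    (hε₁ : Measurable ε₁) (hε₂ : Measurable ε₂)
    (τ : ℝ) (hτ : 0 < τ)
    (hlaw₁ : μ.map ε₁ = gaussianReal 0 ⟨τ ^ 2, sq_nonneg τ⟩)
    (hlaw₂ : μ.map ε₂ = gaussianReal 0 ⟨τ ^ 2, sq_nonneg τ⟩)
    (hεindep : IndepFun ε₁ ε₂ μ)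
    (hindep : IndepFun (fun ω => (ε₁ ω, ε₂ ω)) (fun ω => (X₁ ω, X₂ ω)) μ)
    (α : ℝ) (hα : 0 < α)
    (hpos : ∀ x : ℝ, 0 < (μ {ω | X₁ ω > x ∧ X₂ ω > x}).toReal)
    (hRV : RegularlyVarying (fun x => (μ {ω | X₁ ω > x ∧ X₂ ω > x}).toReal) (-α)) :
    Tendsto (fun x =>
        (μ {ω | X₁ ω + ε₁ ω > x ∧ X₂ ω + ε₂ ω > x}).toReal /
          (μ {ω | X₁ ω > x ∧ X₂ ω > x}).toReal) atTop (nhds 1) := by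
  set v : ℝ≥0 := (⟨τ ^ 2, sq_nonneg τ⟩ : ℝ≥0) with hvdef
  have hvne : v ≠ 0 := by
    refine fun h => absurd (congrArg (fun x : ℝ≥0 => (x:ℝ)) h) ?_
    simp only [hvdef, NNReal.coe_mk, NNReal.coe_zero]
    exact fun h => by have h' : τ ^ 2 = 0 := h; nlinarith [pow_pos hτ 2]
  set F : ℝ → ℝ := fun y => (μ {ω | X₁ ω > y ∧ X₂ ω > y}).toReal with hFdef
  have hFmono : Antitone F := fun x y hxy =>
    ENNReal.toReal_mono (measure_ne_top μ _)
      (measure_mono fun ω hω => ⟨lt_of_le_of_lt hxy hω.1, lt_of_le_of_lt hxy hω.2⟩)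
  set T : ℝ → ℝ := fun t => (gaussianReal 0 v (Set.Ioi t)).toReal with hTdef
  have hεt₁ : ∀ t : ℝ, μ {ω | t < ε₁ ω} = gaussianReal 0 v (Set.Ioi t) := by
    intro t
    rw [← hlaw₁, Measure.map_apply hε₁ measurableSet_Ioi]
    rfl
  have hεt₂ : ∀ t : ℝ, μ {ω | t < ε₂ ω} = gaussianReal 0 v (Set.Ioi t) := by
    intro t
    rw [← hlaw₂, Measure.map_apply hε₂ measurableSet_Ioi]
    rfl
  set K : ℝ := (Real.sqrt (2 * π * v))⁻¹ with hKdef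
  have hvpos : (0:ℝ) < v := by positivity
  have hK : 0 < K := by positivity
  -- polynomial lower bound
  have hrv2 := hRV 2 two_pos
  have hlt : (2:ℝ) ^ (-(α+1)) < (2:ℝ) ^ (-α) :=
    (Real.rpow_lt_rpow_left_iff one_lt_two).2 (by linarith)
  obtain ⟨x₁, hx₁⟩ := (hrv2.eventually (eventually_gt_nhds hlt)).exists_forall_of_atTop
  obtain ⟨C, hC, hCb⟩ := poly_lower' F hFmono hpos (β := α + 1) (by linarith)
    (le_max_right x₁ 1) (fun x hx => by
      have h1 := hx₁ x (le_trans (le_max_left x₁ 1) hx)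
      exact le_of_lt ((lt_div_iff₀ (hpos x)).1 h1))
  -- tail over F tends to zero
  have tailF : ∀ a : ℝ, 0 < a → Tendsto (fun x => T (a * x) / F x) atTop (nhds 0) := by
    intro a ha
    have hg : Tendsto (fun x : ℝ => K / C * (x ^ (α+1) * Real.exp (-a * x))) atTop (nhds 0) := by
      have := (tendsto_rpow_mul_exp_neg_mul_atTop_nhds_zero (α+1) a ha).const_mul (K / C)
      simpa using this
    apply squeeze_zero' (t₀ := atTop)
    · filter_upwards with x using div_nonneg ENNReal.toReal_nonneg (hpos x).le
    · filter_upwards [eventually_ge_atTop (max x₁ 1), eventually_ge_atTop (2 * (v:ℝ) / a),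
        eventually_gt_atTop 0] with x hxa hxb hx0
      have hT : T (a * x) ≤ K * Real.exp (-(a * x)) :=
        gauss_tail_le' hvne (by rw [div_le_iff₀ ha] at hxb; linarith [mul_comm a x])
      have hF : C * x ^ (-(α+1)) ≤ F x := hCb x hxa
      have hxp : (0:ℝ) < x ^ (-(α+1)) := Real.rpow_pos_of_pos hx0 _
      calc T (a * x) / F x ≤ (K * Real.exp (-(a * x))) / (C * x ^ (-(α+1))) := by
            exact div_le_div₀ (by positivity) hT (by positivity) hF
          _ = K / C * (x ^ (α+1) * Real.exp (-a * x)) := by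
            rw [Real.rpow_neg hx0.le]
            field_simp
    · exact hg
  -- union bound
  have union_bd : ∀ c : ℝ, c < 1 → ∀ x : ℝ,
      (μ {ω | X₁ ω + ε₁ ω > x ∧ X₂ ω + ε₂ ω > x}).toReal ≤
        F (c * x) + (T ((1 - c) * x) + T ((1 - c) * x)) := by
    intro c hc x
    have hsub : {ω | X₁ ω + ε₁ ω > x ∧ X₂ ω + ε₂ ω > x} ⊆
        {ω | X₁ ω > c * x ∧ X₂ ω > c * x} ∪
          ({ω | (1 - c) * x < ε₁ ω} ∪ {ω | (1 - c) * x < ε₂ ω}) := by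
      intro ω hω
      by_cases h1 : (1 - c) * x < ε₁ ω
      · exact Or.inr (Or.inl h1)
      by_cases h2 : (1 - c) * x < ε₂ ω
      · exact Or.inr (Or.inr h2)
      push_neg at h1 h2
      have ha := hω.1; have hb := hω.2
      exact Or.inl ⟨by simp only [gt_iff_lt] at ha ⊢; nlinarith, by
        simp only [gt_iff_lt] at hb ⊢; nlinarith⟩
    have hm : μ {ω | X₁ ω + ε₁ ω > x ∧ X₂ ω + ε₂ ω > x} ≤
        μ {ω | X₁ ω > c * x ∧ X₂ ω > c * x} +
          (μ {ω | (1 - c) * x < ε₁ ω} + μ {ω | (1 - c) * x < ε₂ ω}) :=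
      (measure_mono hsub).trans ((measure_union_le _ _).trans
        (add_le_add le_rfl (measure_union_le _ _)))
    calc (μ {ω | X₁ ω + ε₁ ω > x ∧ X₂ ω + ε₂ ω > x}).toReal
        ≤ (μ {ω | X₁ ω > c * x ∧ X₂ ω > c * x} +
            (μ {ω | (1 - c) * x < ε₁ ω} + μ {ω | (1 - c) * x < ε₂ ω})).toReal :=
          ENNReal.toReal_mono (by finiteness) hm
      _ = F (c * x) + (T ((1 - c) * x) + T ((1 - c) * x)) := by
          rw [ENNReal.toReal_add (by finiteness) (by finiteness),
            ENNReal.toReal_add (by finiteness) (by finiteness), hεt₁, hεt₂]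
  -- independence lower bound
  have prod_bd : ∀ M x : ℝ,
      F (x + M) * ((gaussianReal 0 v (Set.Ioi (-M))).toReal *
          (gaussianReal 0 v (Set.Ioi (-M))).toReal) ≤
        (μ {ω | X₁ ω + ε₁ ω > x ∧ X₂ ω + ε₂ ω > x}).toReal := by
    intro M x
    have hpre : (fun ω => (ε₁ ω, ε₂ ω)) ⁻¹' (Set.Ioi (-M) ×ˢ Set.Ioi (-M)) ∩
        (fun ω => (X₁ ω, X₂ ω)) ⁻¹' (Set.Ioi (x + M) ×ˢ Set.Ioi (x + M)) ⊆
          {ω | X₁ ω + ε₁ ω > x ∧ X₂ ω + ε₂ ω > x} := by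
      rintro ω ⟨⟨he1, he2⟩, hx1, hx2⟩
      simp only [Set.mem_Ioi] at he1 he2 hx1 hx2
      exact ⟨by linarith, by linarith⟩
    have hmul := hindep.measure_inter_preimage_eq_mul
      (s := Set.Ioi (-M) ×ˢ Set.Ioi (-M)) (t := Set.Ioi (x + M) ×ˢ Set.Ioi (x + M))
      (measurableSet_Ioi.prod measurableSet_Ioi) (measurableSet_Ioi.prod measurableSet_Ioi)
    have hmul2 : μ ((fun ω => (ε₁ ω, ε₂ ω)) ⁻¹' (Set.Ioi (-M) ×ˢ Set.Ioi (-M))) =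
        gaussianReal 0 v (Set.Ioi (-M)) * gaussianReal 0 v (Set.Ioi (-M)) := by
      rw [Set.mk_preimage_prod,
        hεindep.measure_inter_preimage_eq_mul _ _ measurableSet_Ioi measurableSet_Ioi]
      have e1 : ε₁ ⁻¹' Set.Ioi (-M) = {ω | -M < ε₁ ω} := rfl
      have e2 : ε₂ ⁻¹' Set.Ioi (-M) = {ω | -M < ε₂ ω} := rfl
      rw [e1, e2, hεt₁, hεt₂]
    have hX : (fun ω => (X₁ ω, X₂ ω)) ⁻¹' (Set.Ioi (x + M) ×ˢ Set.Ioi (x + M)) =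
        {ω | X₁ ω > x + M ∧ X₂ ω > x + M} := by
      rw [Set.mk_preimage_prod]; rfl
    have key : gaussianReal 0 v (Set.Ioi (-M)) * gaussianReal 0 v (Set.Ioi (-M)) *
        μ {ω | X₁ ω > x + M ∧ X₂ ω > x + M} ≤
          μ {ω | X₁ ω + ε₁ ω > x ∧ X₂ ω + ε₂ ω > x} := by
      rw [← hmul2, ← hX, ← hmul]
      exact measure_mono hpre
    calc F (x + M) * ((gaussianReal 0 v (Set.Ioi (-M))).toReal *
          (gaussianReal 0 v (Set.Ioi (-M))).toReal)
        = (gaussianReal 0 v (Set.Ioi (-M)) * gaussianReal 0 v (Set.Ioi (-M)) *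
            μ {ω | X₁ ω > x + M ∧ X₂ ω > x + M}).toReal := by
          rw [ENNReal.toReal_mul, ENNReal.toReal_mul]
          show F (x + M) * _ = _
          ring
      _ ≤ (μ {ω | X₁ ω + ε₁ ω > x ∧ X₂ ω + ε₂ ω > x}).toReal :=
          ENNReal.toReal_mono (by finiteness) key
  -- left tail bound and p → 1
  have left_le : ∀ M : ℝ, 2 * (v:ℝ) + 1 ≤ M →
      (gaussianReal 0 v (Set.Iic (-M))).toReal ≤ K * Real.exp (-(M - 1)) := by
    intro M hM
    have h1 : Measure.map (fun x : ℝ => (-1 : ℝ) * x) (gaussianReal 0 v) = gaussianReal 0 v := by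
      rw [gaussianReal_map_const_mul]
      norm_num
    have hmap : gaussianReal 0 v (Set.Iic (-M)) = gaussianReal 0 v (Set.Ici M) := by
      conv_lhs => rw [← h1]
      rw [Measure.map_apply (measurable_const_mul _) measurableSet_Iic]
      congr 1
      ext y
      simp only [Set.mem_preimage, Set.mem_Iic, Set.mem_Ici]
      constructor <;> intro h <;> linarith
    rw [hmap]
    have hmono2 : gaussianReal 0 v (Set.Ici M) ≤ gaussianReal 0 v (Set.Ioi (M - 1)) :=
      measure_mono fun y (hy : M ≤ y) => show M - 1 < y by linarith
    exact le_trans (ENNReal.toReal_mono (by finiteness) hmono2)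
      (gauss_tail_le' hvne (by linarith))
  have hleft0 : Tendsto (fun M : ℝ => (gaussianReal 0 v (Set.Iic (-M))).toReal) atTop (nhds 0) := by
    have hg : Tendsto (fun M : ℝ => K * Real.exp (-(M - 1))) atTop (nhds 0) := by
      have h2 : Tendsto (fun M : ℝ => Real.exp (-(M - 1))) atTop (nhds 0) := by
        have h3 := Real.tendsto_exp_neg_atTop_nhds_zero.comp
          (tendsto_atTop_add_const_right atTop (-1 : ℝ) tendsto_id)
        exact h3.congr fun M => by norm_num [Function.comp, sub_eq_add_neg]
      simpa using h2.const_mul K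
    exact squeeze_zero' (Filter.Eventually.of_forall fun M => ENNReal.toReal_nonneg)
      (by filter_upwards [eventually_ge_atTop (2 * (v:ℝ) + 1)] with M hM using left_le M hM) hg
  have hsplit : ∀ M : ℝ, (gaussianReal 0 v (Set.Ioi (-M))).toReal =
      1 - (gaussianReal 0 v (Set.Iic (-M))).toReal := by
    intro M
    have hc := measure_compl (μ := gaussianReal 0 v) (measurableSet_Iic (a := -M))
      (measure_ne_top _ _)
    rw [Set.compl_Iic, measure_univ] at hc
    rw [hc, ENNReal.toReal_sub_of_le prob_le_one (by norm_num), ENNReal.toReal_one]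
  have hp : Tendsto (fun M : ℝ => (gaussianReal 0 v (Set.Ioi (-M))).toReal) atTop (nhds 1) := by
    have := tendsto_const_nhds (α := ℝ) (x := (1:ℝ)) (f := atTop) |>.sub hleft0
    rw [sub_zero] at this
    exact this.congr fun M => (hsplit M).symm
  -- final assembly
  rw [Metric.tendsto_nhds]
  intro η hη
  set δ : ℝ := min η (1/2) with hδdef
  have hδpos : 0 < δ := lt_min hη (by norm_num)
  have hδle : δ ≤ 1/2 := min_le_right _ _
  have hδη : δ ≤ η := min_le_left _ _
  have hbase1 : (0:ℝ) < 1 + δ/2 := by linarith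
  set c : ℝ := (1 + δ/2) ^ (-(α⁻¹)) with hcdef
  have hc0 : 0 < c := Real.rpow_pos_of_pos hbase1 _
  have hc1 : c < 1 :=
    Real.rpow_lt_one_of_one_lt_of_neg (by linarith) (neg_lt_zero.2 (inv_pos.2 hα))
  have hcα : c ^ (-α) = 1 + δ/2 := by
    rw [hcdef, ← Real.rpow_mul hbase1.le, neg_mul_neg, inv_mul_cancel₀ hα.ne', Real.rpow_one]
  have hup := hRV c hc0
  rw [hcα] at hup
  have ev1 : ∀ᶠ x in atTop, F (c * x) / F x < 1 + 3*δ/4 :=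
    hup.eventually (eventually_lt_nhds (by linarith))
  have ev2 : ∀ᶠ x in atTop, T ((1 - c) * x) / F x < δ/8 :=
    (tailF (1 - c) (by linarith)).eventually (eventually_lt_nhds (by linarith))
  have hbase2a : (0:ℝ) < 1 - δ/2 := by linarith
  set c' : ℝ := (1 - δ/2) ^ (-(α⁻¹)) with hc'def
  have hc'0 : 0 < c' := Real.rpow_pos_of_pos hbase2a _
  have hc'1 : 1 < c' := (Real.one_lt_rpow_iff_of_pos hbase2a).2
    (Or.inr ⟨by linarith, neg_lt_zero.2 (inv_pos.2 hα)⟩)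
  have hc'α : c' ^ (-α) = 1 - δ/2 := by
    rw [hc'def, ← Real.rpow_mul hbase2a.le, neg_mul_neg, inv_mul_cancel₀ hα.ne', Real.rpow_one]
  have hlow := hRV c' hc'0
  rw [hc'α] at hlow
  have hpM : Tendsto (fun M : ℝ => (1 - δ/2) * ((gaussianReal 0 v (Set.Ioi (-M))).toReal *
      (gaussianReal 0 v (Set.Ioi (-M))).toReal)) atTop (nhds ((1 - δ/2) * (1 * 1))) :=
    tendsto_const_nhds.mul (hp.mul hp)
  obtain ⟨M, hM1⟩ := (hpM.eventually (eventually_gt_nhds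
    (show 1 - 3*δ/4 < (1 - δ/2) * (1 * 1) by nlinarith))).exists
  set p : ℝ := (gaussianReal 0 v (Set.Ioi (-M))).toReal with hpdef
  have hpnn : 0 ≤ p := ENNReal.toReal_nonneg
  have ev3 : ∀ᶠ x in atTop, 1 - δ < F (c' * x) / F x * (p * p) :=
    (hlow.mul_const (p * p)).eventually (eventually_gt_nhds (by nlinarith))
  filter_upwards [ev1, ev2, ev3, eventually_ge_atTop (M / (c' - 1)),
    eventually_gt_atTop 0] with x h1 h2 h3 h4 h5
  show dist ((μ {ω | X₁ ω + ε₁ ω > x ∧ X₂ ω + ε₂ ω > x}).toReal / F x) 1 < η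
  set Gx : ℝ := (μ {ω | X₁ ω + ε₁ ω > x ∧ X₂ ω + ε₂ ω > x}).toReal with hGx
  have hGnn : 0 ≤ Gx := ENNReal.toReal_nonneg
  have hFx := hpos x
  have hFx' : 0 < F x := hFx
  have hub : Gx / F x ≤ F (c * x) / F x + (T ((1 - c) * x) / F x + T ((1 - c) * x) / F x) := by
    have h := union_bd c hc1 x
    have hTnn : 0 ≤ T ((1 - c) * x) := ENNReal.toReal_nonneg
    have hFnn : 0 ≤ F (c * x) := ENNReal.toReal_nonneg
    calc Gx / F x ≤ (F (c * x) + (T ((1 - c) * x) + T ((1 - c) * x))) / F x :=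
          div_le_div₀ (by linarith) h hFx' le_rfl
      _ = _ := by ring
  have hxc' : x + M ≤ c' * x := by
    rw [div_le_iff₀ (by linarith)] at h4
    nlinarith
  have hlb : F (c' * x) / F x * (p * p) ≤ Gx / F x := by
    have hs1 : F (c' * x) * (p * p) ≤ F (x + M) * (p * p) :=
      mul_le_mul_of_nonneg_right (hFmono hxc') (mul_nonneg hpnn hpnn)
    have hs2 : F (c' * x) * (p * p) ≤ Gx := hs1.trans (prod_bd M x)
    calc F (c' * x) / F x * (p * p) = (F (c' * x) * (p * p)) / F x := by ring
      _ ≤ Gx / F x := div_le_div₀ hGnn hs2 hFx' le_rfl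
  rw [Real.dist_eq, abs_lt]
  constructor
  · linarith
  · linarith

end
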